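/- If X_1, ..., X_N are random variables satisfying H(X_{L^C} | X_L) ≥ h for every subset L ⊆ [1:N] of size ℓ (where L^C is the complement), then Σ_{i=1}^N H(X_i) ≥ N·h/(N−ℓ). -/

import Mathlib

open Finset

variable {Ω : Type*} [Fintype Ω]

/-- Probability mass of the event `X = s` under the pmf `p` on a finite sample space. -/
noncomputable def pm (p : Ω → ℝ) {S : Type*} [DecidableEq S] (X : Ω → S) (s : S) : ℝ :=
  ∑ ω ∈ Finset.univ.filter (fun ω => X ω = s), p ω

/-- Shannon entropy of a finite random variable `X` under the pmf `p`. -/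
noncomputable def ent (p : Ω → ℝ) {S : Type*} [Fintype S] [DecidableEq S] (X : Ω → S) : ℝ :=
  -∑ s, pm p X s * Real.log (pm p X s)

/-- Conditional entropy `H(X | Y) = H(X, Y) - H(Y)`. -/
noncomputable def condEnt (p : Ω → ℝ) {S T : Type*} [Fintype S] [DecidableEq S]
    [Fintype T] [DecidableEq T] (X : Ω → S) (Y : Ω → T) : ℝ :=
  ent p (fun ω => (X ω, Y ω)) - ent p Y

/-- Mutual information `I(X ; Y) = H(X) + H(Y) - H(X, Y)`. -/
noncomputable def mutInf (p : Ω → ℝ) {S T : Type*} [Fintype S] [DecidableEq S]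
    [Fintype T] [DecidableEq T] (X : Ω → S) (Y : Ω → T) : ℝ :=
  ent p X + ent p Y - ent p (fun ω => (X ω, Y ω))

lemma pm_nonneg (p : Ω → ℝ) (hp0 : ∀ ω, 0 ≤ p ω) {S : Type*} [DecidableEq S]
    (X : Ω → S) (s : S) : 0 ≤ pm p X s :=
  Finset.sum_nonneg fun ω _ => hp0 ω

lemma pm_sum (p : Ω → ℝ) {S : Type*} [Fintype S] [DecidableEq S] (X : Ω → S) :
    ∑ s, pm p X s = ∑ ω, p ω := by
  unfold pm
  exact Finset.sum_fiberwise_of_maps_to (fun x _ => Finset.mem_univ _) p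

lemma pm_fst (p : Ω → ℝ) {S T : Type*} [Fintype S] [DecidableEq S] [Fintype T] [DecidableEq T]
    (X : Ω → S) (Y : Ω → T) (s : S) :
    pm p X s = ∑ t, pm p (fun ω => (X ω, Y ω)) (s, t) := by
  unfold pm
  rw [← Finset.sum_fiberwise_of_maps_to (g := Y)
      (fun ω _ => Finset.mem_univ (Y ω)) p]
  refine Finset.sum_congr rfl fun t _ => Finset.sum_congr ?_ fun _ _ => rfl
  ext ω
  simp [Prod.ext_iff, and_comm]

lemma pm_snd (p : Ω → ℝ) {S T : Type*} [Fintype S] [DecidableEq S] [Fintype T] [DecidableEq T]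
    (X : Ω → S) (Y : Ω → T) (t : T) :
    pm p Y t = ∑ s, pm p (fun ω => (X ω, Y ω)) (s, t) := by
  unfold pm
  rw [← Finset.sum_fiberwise_of_maps_to (g := X)
      (fun ω _ => Finset.mem_univ (X ω)) p]
  refine Finset.sum_congr rfl fun s _ => Finset.sum_congr ?_ fun _ _ => rfl
  ext ω
  simp [Prod.ext_iff, and_comm]

lemma ent_pair_le (p : Ω → ℝ) (hp0 : ∀ ω, 0 ≤ p ω) (hp1 : ∑ ω, p ω = 1)
    {S T : Type*} [Fintype S] [DecidableEq S] [Fintype T] [DecidableEq T]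
    (X : Ω → S) (Y : Ω → T) :
    ent p (fun ω => (X ω, Y ω)) ≤ ent p X + ent p Y := by
  set q : S × T → ℝ := pm p (fun ω => (X ω, Y ω)) with hqdef
  set a : S → ℝ := pm p X with hadef
  set b : T → ℝ := pm p Y with hbdef
  have hq0 : ∀ z, 0 ≤ q z := fun z => pm_nonneg p hp0 _ z
  have ha : ∀ s, a s = ∑ t, q (s, t) := fun s => pm_fst p X Y s
  have hb : ∀ t, b t = ∑ s, q (s, t) := fun t => pm_snd p X Y t
  have hasum : ∑ s, a s = 1 := by rw [hadef, pm_sum, hp1]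
  have hbsum : ∑ t, b t = 1 := by rw [hbdef, pm_sum, hp1]
  have hqsum : ∑ s, ∑ t, q (s, t) = 1 := by
    rw [← Fintype.sum_prod_type, hqdef, pm_sum, hp1]
  have key : ∀ s t, q (s, t) * Real.log (a s) + q (s, t) * Real.log (b t) ≤
      q (s, t) * Real.log (q (s, t)) + (a s * b t - q (s, t)) := by
    intro s t
    rcases eq_or_lt_of_le (hq0 (s, t)) with hq | hq
    · simp [← hq]
      exact mul_nonneg (pm_nonneg p hp0 X s) (pm_nonneg p hp0 Y t)
    · have hap : 0 < a s := lt_of_lt_of_le hq (by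
        rw [ha]
        exact Finset.single_le_sum (fun t' _ => hq0 (s, t')) (Finset.mem_univ t))
      have hbp : 0 < b t := lt_of_lt_of_le hq (by
        rw [hb]
        exact Finset.single_le_sum (fun s' _ => hq0 (s', t)) (Finset.mem_univ s))
      have hlog := Real.log_le_sub_one_of_pos
        (show 0 < a s * b t / q (s, t) from div_pos (mul_pos hap hbp) hq)
      rw [Real.log_div (ne_of_gt (mul_pos hap hbp)) (ne_of_gt hq),
        Real.log_mul (ne_of_gt hap) (ne_of_gt hbp)] at hlog
      have h2 := mul_le_mul_of_nonneg_left hlog (le_of_lt hq)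
      have h3 : q (s, t) * (a s * b t / q (s, t)) = a s * b t := by
        field_simp
      nlinarith [h2, h3]
  have hsum : ∑ s, ∑ t, (q (s, t) * Real.log (a s) + q (s, t) * Real.log (b t)) ≤
      ∑ s, ∑ t, (q (s, t) * Real.log (q (s, t)) + (a s * b t - q (s, t))) :=
    Finset.sum_le_sum fun s _ => Finset.sum_le_sum fun t _ => key s t
  have E1 : ∑ s, a s * Real.log (a s) = ∑ s, ∑ t, q (s, t) * Real.log (a s) := by
    refine Finset.sum_congr rfl fun s _ => ?_
    rw [ha s, Finset.sum_mul]
  have E2 : ∑ t, b t * Real.log (b t) = ∑ s, ∑ t, q (s, t) * Real.log (b t) := by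
    rw [Finset.sum_comm]
    refine Finset.sum_congr rfl fun t _ => ?_
    rw [hb t, Finset.sum_mul]
  have E3 : ∑ z, q z * Real.log (q z) = ∑ s, ∑ t, q (s, t) * Real.log (q (s, t)) :=
    Fintype.sum_prod_type _
  have E4 : ∑ s, ∑ t, a s * b t = 1 := by
    rw [← Finset.sum_mul_sum, hasum, hbsum, one_mul]
  simp only [Finset.sum_add_distrib, Finset.sum_sub_distrib] at hsum
  rw [E4, hqsum] at hsum
  have goal : -∑ z, q z * Real.log (q z) ≤
      (-∑ s, a s * Real.log (a s)) + -∑ t, b t * Real.log (b t) := by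
    rw [E1, E2, E3]; linarith
  exact goal

lemma ent_comp_inj (p : Ω → ℝ) {S T : Type*} [Fintype S] [DecidableEq S]
    [Fintype T] [DecidableEq T] (X : Ω → S) {g : S → T} (hg : Function.Injective g) :
    ent p (fun ω => g (X ω)) = ent p X := by
  have hpm : ∀ s, pm p (fun ω => g (X ω)) (g s) = pm p X s := by
    intro s
    unfold pm
    refine Finset.sum_congr ?_ fun _ _ => rfl
    ext ω
    simp [hg.eq_iff]
  have hzero : ∀ t, t ∉ Finset.univ.image g → pm p (fun ω => g (X ω)) t = 0 := by
    intro t ht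
    unfold pm
    rw [Finset.sum_eq_zero]
    intro ω hω
    simp only [Finset.mem_filter, Finset.mem_univ, true_and] at hω
    exact absurd (Finset.mem_image.mpr ⟨X ω, Finset.mem_univ _, hω⟩) ht
  unfold ent
  rw [← Finset.sum_subset (Finset.subset_univ (Finset.univ.image g))
      (fun t _ ht => by rw [hzero t ht]; simp),
    Finset.sum_image (fun a _ b _ hab => hg hab)]
  simp_rw [hpm]

lemma ent_of_subsingleton (p : Ω → ℝ) (hp1 : ∑ ω, p ω = 1) {T : Type*} [Fintype T]
    [DecidableEq T] [Subsingleton T] (F : Ω → T) : ent p F = 0 := by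
  unfold ent
  rw [Finset.sum_eq_zero]
  · simp
  intro t _
  have hfil : Finset.univ.filter (fun ω => F ω = t) = Finset.univ := by
    ext ω; simp [Subsingleton.elim (F ω) t]
  unfold pm
  rw [hfil, hp1]
  simp

lemma ent_tuple_le (p : Ω → ℝ) (hp0 : ∀ ω, 0 ≤ p ω) (hp1 : ∑ ω, p ω = 1)
    {S : Type*} [Fintype S] [DecidableEq S] {n : ℕ} (X : Fin n → Ω → S)
    (T : Finset (Fin n)) :
    ent p (fun ω => fun i : {x // x ∈ T} => X i.1 ω) ≤ ∑ i ∈ T, ent p (X i) := by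
  induction T using Finset.induction with
  | empty =>
    haveI : IsEmpty {x // x ∈ (∅ : Finset (Fin n))} :=
      ⟨fun x => Finset.notMem_empty x.1 x.2⟩
    haveI : Subsingleton ({x // x ∈ (∅ : Finset (Fin n))} → S) :=
      ⟨fun f g => funext fun x => isEmptyElim x⟩
    rw [ent_of_subsingleton p hp1]
    simp
  | @insert a T' ha ih =>
    set g : ({x // x ∈ insert a T'} → S) → S × ({x // x ∈ T'} → S) :=
      fun f => (f ⟨a, Finset.mem_insert_self a T'⟩,
        fun i => f ⟨i.1, Finset.mem_insert_of_mem i.2⟩) with hgdef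
    have hg : Function.Injective g := by
      intro f₁ f₂ hEq
      have h1 := congrArg Prod.fst hEq
      have h2 := congrArg Prod.snd hEq
      funext x
      rcases Finset.mem_insert.mp x.2 with hxa | hx
      · have hx' : x = ⟨a, Finset.mem_insert_self a T'⟩ := Subtype.ext hxa
        rw [hx']; exact h1
      · exact congrFun h2 ⟨x.1, hx⟩
    have e1 := ent_comp_inj p (fun ω => fun i : {x // x ∈ insert a T'} => X i.1 ω) hg
    have e2 : ent p (fun ω => g ((fun ω' => fun i : {x // x ∈ insert a T'} => X i.1 ω') ω)) ≤
        ent p (X a) + ent p (fun ω => fun i : {x // x ∈ T'} => X i.1 ω) :=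
      ent_pair_le p hp0 hp1 _ _
    rw [e1] at e2
    rw [Finset.sum_insert ha]
    exact le_trans e2 (add_le_add_right ih _)

/-- If `X₁,…,X_N` satisfy `H(X_{Lᶜ} | X_L) ≥ h` for every subset
`L ⊆ [1:N]` of size `ℓ` (with `0 ≤ ℓ < N`), then `Σᵢ H(Xᵢ) ≥ N·h/(N-ℓ)`. -/
theorem han_type_entropy_bound
    {Ω : Type*} [Fintype Ω] (p : Ω → ℝ)
    (hp0 : ∀ ω, 0 ≤ p ω) (hp1 : ∑ ω, p ω = 1)
    {S : Type*} [Fintype S] [DecidableEq S]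
    (N ℓ : ℕ) (hℓN : ℓ < N) (h : ℝ)
    (X : Fin N → Ω → S)
    (hcond : ∀ L : Finset (Fin N), L.card = ℓ →
      condEnt p (fun ω => fun i : {x // x ∈ Lᶜ} => X i.1 ω)
        (fun ω => fun i : {x // x ∈ L} => X i.1 ω) ≥ h) :
    ∑ i, ent p (X i) ≥ (N : ℝ) * h / ((N : ℝ) - (ℓ : ℝ)) := by
  -- per-L bound
  have perL : ∀ L : Finset (Fin N), L.card = ℓ → h ≤ ∑ i ∈ Lᶜ, ent p (X i) := by
    intro L hL
    have h1 := hcond L hL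
    have h2 : condEnt p (fun ω => fun i : {x // x ∈ Lᶜ} => X i.1 ω)
        (fun ω => fun i : {x // x ∈ L} => X i.1 ω) ≤
        ent p (fun ω => fun i : {x // x ∈ Lᶜ} => X i.1 ω) := by
      have := ent_pair_le p hp0 hp1 (fun ω => fun i : {x // x ∈ Lᶜ} => X i.1 ω)
        (fun ω => fun i : {x // x ∈ L} => X i.1 ω)
      unfold condEnt
      linarith
    exact le_trans (le_trans h1 h2) (ent_tuple_le p hp0 hp1 X Lᶜ)
  set PS := Finset.powersetCard ℓ (Finset.univ : Finset (Fin N)) with hP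
  have hPcard : PS.card = N.choose ℓ := by
    rw [hP, Finset.card_powersetCard, Finset.card_univ, Fintype.card_fin]
  have hmemP : ∀ L ∈ PS, L.card = ℓ := by
    intro L hL
    exact (Finset.mem_powersetCard.mp hL).2
  have sumL : (PS.card : ℝ) * h ≤ ∑ L ∈ PS, ∑ i ∈ Lᶜ, ent p (X i) := by
    calc (PS.card : ℝ) * h = ∑ _L ∈ PS, h := by rw [Finset.sum_const, nsmul_eq_mul]
    _ ≤ _ := Finset.sum_le_sum fun L hL => perL L (hmemP L hL)
  have count : ∀ i : Fin N, (PS.filter (fun L => i ∈ Lᶜ)).card = (N - 1).choose ℓ := by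
    intro i
    have : PS.filter (fun L => i ∈ Lᶜ) =
        Finset.powersetCard ℓ (Finset.univ.erase i) := by
      ext L
      simp [hP, Finset.mem_powersetCard, Finset.subset_erase, Finset.mem_compl, and_comm,
        and_assoc, Finset.subset_univ]
    rw [this, Finset.card_powersetCard, Finset.card_erase_of_mem (Finset.mem_univ i),
      Finset.card_univ, Fintype.card_fin]
  have swap : ∑ L ∈ PS, ∑ i ∈ Lᶜ, ent p (X i) =
      ((N - 1).choose ℓ : ℝ) * ∑ i, ent p (X i) := by
    have e1 : ∀ L : Finset (Fin N), ∑ i ∈ Lᶜ, ent p (X i) =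
        ∑ i : Fin N, if i ∈ Lᶜ then ent p (X i) else 0 := by
      intro L
      rw [Finset.sum_ite_mem, Finset.univ_inter]
    simp_rw [e1]
    rw [Finset.sum_comm]
    rw [Finset.mul_sum]
    refine Finset.sum_congr rfl fun i _ => ?_
    rw [Finset.sum_ite, Finset.sum_const, Finset.sum_const_zero, add_zero, count i,
      nsmul_eq_mul]
  rw [swap, hPcard] at sumL
  -- combinatorial identity
  have hid : N.choose ℓ * (N - ℓ) = (N - 1).choose ℓ * N := by
    obtain ⟨m, rfl⟩ : ∃ m, N = m + 1 := ⟨N - 1, by omega⟩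
    simp only [Nat.add_sub_cancel]
    calc (m + 1).choose ℓ * (m + 1 - ℓ) = (m + 1).choose (ℓ + 1) * (ℓ + 1) :=
          (Nat.choose_succ_right_eq (m + 1) ℓ).symm
      _ = (m + 1) * m.choose ℓ := (Nat.add_one_mul_choose_eq m ℓ).symm
      _ = m.choose ℓ * (m + 1) := Nat.mul_comm _ _
  have hidR : (N.choose ℓ : ℝ) * ((N : ℝ) - (ℓ : ℝ)) = ((N - 1).choose ℓ : ℝ) * N := by
    have := congrArg (Nat.cast (R := ℝ)) hid
    push_cast [Nat.cast_sub (le_of_lt hℓN)] at this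
    linarith
  have hC : (0 : ℝ) < ((N - 1).choose ℓ : ℝ) := by
    exact_mod_cast Nat.choose_pos (by omega)
  have hNl : (0 : ℝ) < (N : ℝ) - (ℓ : ℝ) := by
    have : (ℓ : ℝ) < N := by exact_mod_cast hℓN
    linarith
  rw [ge_iff_le, div_le_iff₀ hNl]
  have hmul := mul_le_mul_of_nonneg_right sumL (le_of_lt hNl)
  have hfin : ((N - 1).choose ℓ : ℝ) * ((N : ℝ) * h) ≤
      ((N - 1).choose ℓ : ℝ) * ((∑ i, ent p (X i)) * ((N : ℝ) - ℓ)) := by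
    calc ((N - 1).choose ℓ : ℝ) * ((N : ℝ) * h)
        = (N.choose ℓ : ℝ) * h * ((N : ℝ) - (ℓ : ℝ)) := by linear_combination (-h) * hidR
      _ ≤ (((N - 1).choose ℓ : ℝ) * ∑ i, ent p (X i)) * ((N : ℝ) - (ℓ : ℝ)) := hmul
      _ = ((N - 1).choose ℓ : ℝ) * ((∑ i, ent p (X i)) * ((N : ℝ) - ℓ)) := by ring
  exact le_of_mul_le_mul_left hfin hC
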